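/- Let Ω ⊆ ℂⁿ be a bounded open set, let φ : Ω → Ω be holomorphic, and suppose the composition operator C_φ is compact on the Bergman space A²(Ω). Let (h_j) be a sequence of holomorphic functions h_j : Ω → ℂ with ∫_Ω |h_j|² dV ≤ 1 for all j and with h_j → 0 uniformly on every compact subset of Ω. Let (p_j) be a sequence of points of Ω and (r_j) a sequence of positive reals such that the closed Euclidean ball of center p_j and radius r_j is contained in Ω for every j. Then |h_j(φ(p_j))| · (V(B(p_j, r_j)))^{1/2} → 0 as j → ∞, where B(p_j, r_j) is the open Euclidean ball of center p_j and radius r_j. -/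

import Mathlib

open MeasureTheory Metric Filter ENNReal NNReal

noncomputable section

/-- Borel measurable structure on `ℂⁿ` (with the Euclidean norm). -/
instance (n : ℕ) : MeasurableSpace (EuclideanSpace ℂ (Fin n)) := borel _

instance (n : ℕ) : BorelSpace (EuclideanSpace ℂ (Fin n)) := ⟨rfl⟩

/-- The composition operator `C_φ : f ↦ f ∘ φ` is compact on the Bergman space `A²(Ω)`:
every sequence of holomorphic functions on `Ω` lying in the closed unit ball of `A²(Ω)`
has a subsequence whose image under `C_φ` converges in `L²(Ω, V)`. -/
def IsCompactCompositionOperator {n : ℕ} (Ω : Set (EuclideanSpace ℂ (Fin n)))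
    (φ : EuclideanSpace ℂ (Fin n) → EuclideanSpace ℂ (Fin n)) : Prop :=
  ∀ g : ℕ → EuclideanSpace ℂ (Fin n) → ℂ,
    (∀ j, DifferentiableOn ℂ (g j) Ω) →
    (∀ j, ∫⁻ z in Ω, (‖g j z‖₊ : ℝ≥0∞) ^ 2 ∂volume ≤ 1) →
    ∃ k : ℕ → ℕ, StrictMono k ∧
      ∃ h : EuclideanSpace ℂ (Fin n) → ℂ, Measurable h ∧
        Tendsto (fun i => ∫⁻ z in Ω, (‖g (k i) (φ z) - h z‖₊ : ℝ≥0∞) ^ 2 ∂volume)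
          atTop (nhds 0)

/-- `F` parametrizes a nondegenerate (nonconstant) analytic disk contained in `∂Ω`. -/
def IsNondegenAnalyticDiskIn {n : ℕ} (Ω : Set (EuclideanSpace ℂ (Fin n)))
    (F : ℂ → EuclideanSpace ℂ (Fin n)) : Prop :=
  DifferentiableOn ℂ F (ball 0 1) ∧
    (∃ a ∈ ball (0 : ℂ) 1, ∃ b ∈ ball (0 : ℂ) 1, F a ≠ F b) ∧
    F '' ball 0 1 ⊆ frontier Ω

/-- `𝓛`: the union of all nondegenerate analytic disks contained in `∂Ω`. -/
def analyticDiskUnion {n : ℕ} (Ω : Set (EuclideanSpace ℂ (Fin n))) :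
    Set (EuclideanSpace ℂ (Fin n)) :=
  {z | ∃ F : ℂ → EuclideanSpace ℂ (Fin n),
    IsNondegenAnalyticDiskIn Ω F ∧ z ∈ F '' ball 0 1}

/-- `Ω` satisfies the limit point disk condition: every point of the closure of `𝓛`
lies in the closure of some nondegenerate analytic disk in `∂Ω`. -/
def LimitPointDiskCondition {n : ℕ} (Ω : Set (EuclideanSpace ℂ (Fin n))) : Prop :=
  ∀ p ∈ closure (analyticDiskUnion Ω),
    ∃ F : ℂ → EuclideanSpace ℂ (Fin n),
      IsNondegenAnalyticDiskIn Ω F ∧ p ∈ closure (F '' ball 0 1)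


section AuxLemmas
open Real Set Complex

lemma circle_mean_sq {f : ℂ → ℂ} {U : Set ℂ} (hU : IsOpen U) (hf : DifferentiableOn ℂ f U)
    {t : ℝ} (ht : 0 < t) (hcb : closedBall (0:ℂ) t ⊆ U) :
    ENNReal.ofReal (2 * π) * (‖f 0‖₊ : ℝ≥0∞) ^ 2 ≤
      ∫⁻ θ in Set.Ioc 0 (2 * π), (‖f (circleMap 0 t θ)‖₊ : ℝ≥0∞) ^ 2 := by
  have h2π : (0:ℝ) < 2 * π := by positivity
  have hcont : Continuous fun θ : ℝ => f (circleMap 0 t θ) := by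
    rw [continuous_iff_continuousAt]
    intro θ
    exact ((hf.continuousOn.continuousAt
      (hU.mem_nhds (hcb (circleMap_mem_closedBall 0 ht.le θ)))).comp
      (continuous_circleMap 0 t).continuousAt)
  have hmean : (∫ θ in (0:ℝ)..(2*π), f (circleMap 0 t θ)) = (2*π : ℝ) • f 0 := by
    have hc : (∮ z in C(0, t), (z - 0)⁻¹ • f z) = (2 * ↑π * Complex.I) • f 0 :=
      (hf.mono (hcb : closedBall (0:ℂ) t ⊆ U)).circleIntegral_sub_inv_smul (mem_ball_self ht)
    have hne : ∀ θ : ℝ, circleMap 0 t θ ≠ 0 := fun θ => circleMap_ne_center ht.ne'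
    rw [circleIntegral] at hc
    simp only [deriv_circleMap, sub_zero, smul_eq_mul] at hc
    have heq : ∀ θ ∈ Set.uIcc (0:ℝ) (2*π),
        circleMap 0 t θ * Complex.I * ((circleMap 0 t θ)⁻¹ * f (circleMap 0 t θ))
        = Complex.I * f (circleMap 0 t θ) := by
      intro θ _
      field_simp [hne θ]
    rw [intervalIntegral.integral_congr heq, intervalIntegral.integral_const_mul] at hc
    have h2 : Complex.I * (∫ θ in (0:ℝ)..(2*π), f (circleMap 0 t θ))
        = Complex.I * ((2*π:ℝ) • f 0) := by
      rw [hc, Complex.real_smul]; push_cast; ring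
    have := mul_left_cancel₀ Complex.I_ne_zero h2
    exact this
  set B := ENNReal.ofReal (2*π) with hBdef
  have key : B * (‖f 0‖₊ : ℝ≥0∞) = ‖∫ θ in Set.Ioc 0 (2*π), f (circleMap 0 t θ)‖₊ := by
    rw [← intervalIntegral.integral_of_le h2π.le, hmean, nnnorm_smul, ENNReal.coe_mul,
      ← enorm_eq_nnnorm (2*π:ℝ), Real.enorm_eq_ofReal h2π.le]
  have step1 : B * (‖f 0‖₊ : ℝ≥0∞) ≤ ∫⁻ θ in Set.Ioc 0 (2*π), (‖f (circleMap 0 t θ)‖₊ : ℝ≥0∞) := by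
    rw [key]
    exact enorm_integral_le_lintegral_enorm _
  set A := ∫⁻ θ in Set.Ioc 0 (2*π), (‖f (circleMap 0 t θ)‖₊ : ℝ≥0∞) ^ 2 with hAdef
  have hmf : AEMeasurable (fun θ => (‖f (circleMap 0 t θ)‖₊ : ℝ≥0∞))
      (volume.restrict (Set.Ioc 0 (2*π))) :=
    (hcont.measurable.nnnorm.coe_nnreal_ennreal).aemeasurable
  have holder := ENNReal.lintegral_mul_le_Lp_mul_Lq (volume.restrict (Set.Ioc 0 (2*π)))
    (Real.HolderConjugate.two_two : Real.HolderConjugate 2 2) hmf aemeasurable_const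
    (g := fun _ => (1:ℝ≥0∞))
  simp only [mul_one, Pi.mul_apply, ENNReal.one_rpow, lintegral_one,
    Measure.restrict_apply_univ, Real.volume_Ioc, sub_zero] at holder
  have hA2 : (∫⁻ θ in Set.Ioc 0 (2*π), (‖f (circleMap 0 t θ)‖₊ : ℝ≥0∞) ^ (2:ℝ)) = A := by
    rw [hAdef]
    congr 1
    ext θ
    rw [← ENNReal.rpow_natCast]
    norm_num
  rw [hA2, ← hBdef] at holder
  have step2 : B * (‖f 0‖₊ : ℝ≥0∞) ≤ A ^ (1/2:ℝ) * B ^ (1/2:ℝ) := le_trans step1 holder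
  have hsq : (B * (‖f 0‖₊ : ℝ≥0∞))^2 ≤ (A ^ (1/2:ℝ) * B ^ (1/2:ℝ))^2 :=
    pow_le_pow_left₀ zero_le step2 2
  have hRHS : (A ^ (1/2:ℝ) * B ^ (1/2:ℝ))^2 = A * B := by
    rw [mul_pow, ← ENNReal.rpow_natCast (A ^ (1/2:ℝ)) 2, ← ENNReal.rpow_natCast (B ^ (1/2:ℝ)) 2,
      ← ENNReal.rpow_mul, ← ENNReal.rpow_mul]
    norm_num
  have hfin : B * (‖f 0‖₊ : ℝ≥0∞)^2 * B ≤ A * B := by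
    calc B * (‖f 0‖₊ : ℝ≥0∞)^2 * B = (B * (‖f 0‖₊ : ℝ≥0∞))^2 := by ring
    _ ≤ (A ^ (1/2:ℝ) * B ^ (1/2:ℝ))^2 := hsq
    _ = A * B := hRHS
  have hB0 : B ≠ 0 := by simp [hBdef, ENNReal.ofReal_eq_zero, not_le, h2π, Real.pi_pos]
  have hBtop : B ≠ ⊤ := ENNReal.ofReal_ne_top
  exact (ENNReal.mul_le_mul_iff_left hB0 hBtop).mp hfin

lemma submean {n : ℕ} {U : Set (EuclideanSpace ℂ (Fin n))} (hU : IsOpen U)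
    {g : EuclideanSpace ℂ (Fin n) → ℂ} (hg : DifferentiableOn ℂ g U)
    {p : EuclideanSpace ℂ (Fin n)} {r : ℝ} (hr : 0 < r) (hsub : closedBall p r ⊆ U) :
    (‖g p‖₊ : ℝ≥0∞) ^ 2 * volume (ball p r) ≤ ∫⁻ z in ball p r, (‖g z‖₊ : ℝ≥0∞) ^ 2 ∂volume := by
  rcases subsingleton_or_nontrivial (EuclideanSpace ℂ (Fin n)) with hE | hE
  · have : ∫⁻ z in ball p r, (‖g z‖₊ : ℝ≥0∞) ^ 2 ∂volume
        = ∫⁻ _ in ball p r, (‖g p‖₊ : ℝ≥0∞) ^ 2 ∂volume :=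
      lintegral_congr fun z => by rw [Subsingleton.elim z p]
    rw [this, setLIntegral_const]
  -- nontrivial case
  have hd : 0 < Module.finrank ℝ (EuclideanSpace ℂ (Fin n)) := Module.finrank_pos
  set d := Module.finrank ℝ (EuclideanSpace ℂ (Fin n)) with hddef
  -- the translated, truncated integrand
  set G : EuclideanSpace ℂ (Fin n) → ℝ≥0∞ :=
    (ball (0 : EuclideanSpace ℂ (Fin n)) r).indicator
      (fun x => (‖g (p + x)‖₊ : ℝ≥0∞) ^ 2) with hGdef
  have hmemball : ∀ x : EuclideanSpace ℂ (Fin n), p + x ∈ ball p r ↔ x ∈ ball 0 r := by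
    intro x
    rw [mem_ball_iff_norm, add_sub_cancel_left, mem_ball_zero_iff]
  have hgc : ContinuousOn (fun x : EuclideanSpace ℂ (Fin n) => g (p + x)) (ball 0 r) := by
    apply hg.continuousOn.comp (by fun_prop : Continuous
      fun x : EuclideanSpace ℂ (Fin n) => p + x).continuousOn
    intro x hx
    exact hsub (ball_subset_closedBall ((hmemball x).mpr hx))
  have hGmeas : Measurable G := by
    apply LowerSemicontinuous.measurable
    intro x c hc
    by_cases hx : x ∈ ball (0 : EuclideanSpace ℂ (Fin n)) r
    · have hca : ContinuousAt (fun x' : EuclideanSpace ℂ (Fin n) =>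
          (‖g (p + x')‖₊ : ℝ≥0∞) ^ 2) x := by
        have h1 : ContinuousAt (fun x' : EuclideanSpace ℂ (Fin n) => g (p + x')) x :=
          hgc.continuousAt (isOpen_ball.mem_nhds hx)
        exact (ENNReal.continuous_pow 2).continuousAt.comp
          (ENNReal.continuous_coe.continuousAt.comp h1.nnnorm)
      rw [hGdef, indicator_of_mem hx] at hc
      filter_upwards [hca (Ioi_mem_nhds hc), isOpen_ball.mem_nhds hx] with x' h1 h2
      rwa [hGdef, indicator_of_mem h2]
    · rw [hGdef, indicator_of_notMem hx] at hc
      exact absurd hc (by simp)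
  -- translation invariance
  have htrans : ∫⁻ x, G x = ∫⁻ z in ball p r, (‖g z‖₊ : ℝ≥0∞) ^ 2 ∂volume := by
    calc ∫⁻ x, G x = ∫⁻ z, G (z + -p) :=
          ((measurePreserving_add_right volume (-p)).lintegral_comp hGmeas).symm
    _ = ∫⁻ z in ball p r, (‖g z‖₊ : ℝ≥0∞) ^ 2 ∂volume := by
        rw [← lintegral_indicator measurableSet_ball]
        apply lintegral_congr
        intro z
        by_cases hz : z ∈ ball p r
        · have hz' : z + -p ∈ ball (0 : EuclideanSpace ℂ (Fin n)) r := by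
            rw [← hmemball]
            simpa [add_comm, add_assoc] using hz
          have hzz : p + (z + -p) = z := by abel
          rw [hGdef, indicator_of_mem hz', hzz, indicator_of_mem hz]
        · have hz' : z + -p ∉ ball (0 : EuclideanSpace ℂ (Fin n)) r := by
            rw [← hmemball]
            simpa [add_comm, add_assoc] using hz
          rw [hGdef, indicator_of_notMem hz', indicator_of_notMem hz]
  -- polar decomposition
  set σ := (volume : Measure (EuclideanSpace ℂ (Fin n))).toSphere with hσdef
  set ρ := Measure.volumeIoiPow (d - 1) with hρdef
  have hpolar : ∀ H : EuclideanSpace ℂ (Fin n) → ℝ≥0∞, Measurable H →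
      ∫⁻ vt : sphere (0 : EuclideanSpace ℂ (Fin n)) 1 × Ioi (0:ℝ),
        H ((vt.2 : ℝ) • (vt.1 : EuclideanSpace ℂ (Fin n))) ∂(σ.prod ρ) = ∫⁻ x, H x := by
    intro H hH
    have hmp := Measure.measurePreserving_homeomorphUnitSphereProd
      (volume : Measure (EuclideanSpace ℂ (Fin n)))
    have hcomp : Measurable fun vt : sphere (0 : EuclideanSpace ℂ (Fin n)) 1 × Ioi (0:ℝ) =>
        H ((vt.2 : ℝ) • (vt.1 : EuclideanSpace ℂ (Fin n))) :=
      hH.comp ((continuous_subtype_val.comp continuous_snd).smul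
        (continuous_subtype_val.comp continuous_fst)).measurable
    have h1 := hmp.lintegral_comp hcomp
    rw [← h1]
    have h2 : ∀ x : ({0}ᶜ : Set (EuclideanSpace ℂ (Fin n))),
        H (((homeomorphUnitSphereProd (EuclideanSpace ℂ (Fin n)) x).2 : ℝ) •
          ((homeomorphUnitSphereProd (EuclideanSpace ℂ (Fin n)) x).1 :
            EuclideanSpace ℂ (Fin n))) = H x := by
      intro x
      rw [homeomorphUnitSphereProd_apply_snd_coe, homeomorphUnitSphereProd_apply_fst_coe,
        smul_inv_smul₀ (norm_ne_zero_iff.2 x.2)]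
    calc ∫⁻ x : ({0}ᶜ : Set (EuclideanSpace ℂ (Fin n))),
          H (((homeomorphUnitSphereProd _ x).2 : ℝ) • ((homeomorphUnitSphereProd _ x).1 :
            EuclideanSpace ℂ (Fin n))) ∂(volume.comap Subtype.val)
        = ∫⁻ x : ({0}ᶜ : Set (EuclideanSpace ℂ (Fin n))), H x ∂(volume.comap Subtype.val) :=
          lintegral_congr h2
    _ = ∫⁻ x in ({0}ᶜ : Set (EuclideanSpace ℂ (Fin n))), H x := by
          rw [lintegral_subtype_comap (measurableSet_singleton _).compl]
    _ = ∫⁻ x, H x := by rw [restrict_compl_singleton]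
  -- rotation invariance
  have hrotmp : ∀ θ : ℝ, MeasurePreserving
      (fun x : EuclideanSpace ℂ (Fin n) => Complex.exp (θ * Complex.I) • x) volume volume := by
    intro θ
    have hne : Complex.exp (↑θ * Complex.I) ≠ 0 := Complex.exp_ne_zero _
    let Rθ : EuclideanSpace ℂ (Fin n) ≃ₗᵢ[ℝ] EuclideanSpace ℂ (Fin n) :=
      ⟨(LinearEquiv.smulOfNeZero ℂ _ _ hne).restrictScalars ℝ, fun x => by
        simp [LinearEquiv.smulOfNeZero, LinearEquiv.smulOfUnit, LinearEquiv.smulOfNeZero_apply,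
          DistribMulAction.toLinearEquiv, norm_smul,
          Complex.norm_exp_ofReal_mul_I]⟩
    have hco : ⇑Rθ = fun x : EuclideanSpace ℂ (Fin n) => Complex.exp (↑θ * Complex.I) • x := by
      funext x
      simp [Rθ, LinearEquiv.smulOfNeZero, LinearEquiv.smulOfUnit, DistribMulAction.toLinearEquiv]
    have := Rθ.measurePreserving
    rwa [hco] at this
  -- key pointwise inequality
  have hkey : ∀ vt : sphere (0 : EuclideanSpace ℂ (Fin n)) 1 × Ioi (0:ℝ),
      (univ ×ˢ Iio (⟨r, hr⟩ : Ioi (0:ℝ))).indicator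
        (fun _ => ENNReal.ofReal (2*π) * (‖g p‖₊ : ℝ≥0∞)^2) vt
      ≤ ∫⁻ θ in Ioc 0 (2*π),
          G (Complex.exp (↑θ * Complex.I) •
            ((vt.2 : ℝ) • (vt.1 : EuclideanSpace ℂ (Fin n)))) := by
    rintro ⟨v, t⟩
    by_cases htr : (t : ℝ) < r
    · rw [indicator_of_mem (show (v, t) ∈ univ ×ˢ Iio (⟨r, hr⟩ : Ioi (0:ℝ)) from
        ⟨mem_univ _, show t < ⟨r, hr⟩ from Subtype.mk_lt_mk.mpr htr⟩)]
      have hv : ‖(v : EuclideanSpace ℂ (Fin n))‖ = 1 := mem_sphere_zero_iff_norm.mp v.2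
      set f : ℂ → ℂ := fun lam => g (p + lam • (v : EuclideanSpace ℂ (Fin n))) with hfdef
      set U' : Set ℂ := (fun lam : ℂ => p + lam • (v : EuclideanSpace ℂ (Fin n))) ⁻¹' U
        with hU'def
      have hcontaff : Continuous fun lam : ℂ => p + lam • (v : EuclideanSpace ℂ (Fin n)) := by
        fun_prop
      have hU' : IsOpen U' := hU.preimage hcontaff
      have hf : DifferentiableOn ℂ f U' :=
        hg.comp ((differentiable_id.smul_const
          (v : EuclideanSpace ℂ (Fin n))).const_add p).differentiableOn
          (fun lam hlam => hlam)
      have hcb' : closedBall (0:ℂ) (t:ℝ) ⊆ U' := by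
        intro lam hlam
        have h1 : ‖lam • (v : EuclideanSpace ℂ (Fin n))‖ ≤ (t:ℝ) := by
          rw [norm_smul, hv, mul_one]
          exact mem_closedBall_zero_iff.mp hlam
        have h2 : p + lam • (v : EuclideanSpace ℂ (Fin n)) ∈ closedBall p r := by
          rw [mem_closedBall_iff_norm, add_sub_cancel_left]
          exact h1.trans htr.le
        exact hsub h2
      have hcirc := circle_mean_sq hU' hf t.2.out hcb'
      have hf0 : f 0 = g p := by simp [hfdef]
      rw [hf0] at hcirc
      refine le_trans hcirc (le_of_eq (setLIntegral_congr_fun measurableSet_Ioc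
        (fun θ _ => ?_)))
      have hpt : Complex.exp (↑θ * Complex.I) • ((t:ℝ) • (v : EuclideanSpace ℂ (Fin n)))
          = circleMap 0 (t:ℝ) θ • (v : EuclideanSpace ℂ (Fin n)) := by
        rw [circleMap_zero, ← Complex.coe_smul (t:ℝ), smul_smul, mul_comm]
      have hmem2 : circleMap 0 (t:ℝ) θ • (v : EuclideanSpace ℂ (Fin n))
          ∈ ball (0 : EuclideanSpace ℂ (Fin n)) r := by
        rw [mem_ball_zero_iff, norm_smul, hv, mul_one,
          norm_circleMap_zero, abs_of_pos t.2.out]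
        exact htr
      rw [hpt, hGdef, indicator_of_mem hmem2]
    · rw [indicator_of_notMem (by
        simp only [mem_prod, mem_univ, true_and, mem_Iio]
        exact fun h => htr (Subtype.mk_lt_mk.mp h))]
      exact zero_le
  -- measure computation
  have hσρ : (σ.prod ρ) (univ ×ˢ Iio (⟨r, hr⟩ : Ioi (0:ℝ))) = volume (ball p r) := by
    have hdR : (0:ℝ) < (d:ℝ) := by exact_mod_cast hd
    rw [Measure.prod_prod, hσdef, hρdef, Measure.toSphere_apply_univ,
      Measure.volumeIoiPow_apply_Iio, (volume : Measure (EuclideanSpace ℂ (Fin n))).addHaar_ball p hr.le]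
    have hc1 : ((d - 1 : ℕ) : ℝ) + 1 = (d : ℝ) := by
      rw [Nat.cast_sub hd]
      ring
    rw [show ((⟨r, hr⟩ : Ioi (0:ℝ)) : ℝ) = r from rfl]
    simp only [← hddef, Nat.sub_add_cancel hd, hc1]
    rw [mul_right_comm]
    congr 1
    rw [← ENNReal.ofReal_natCast, ← ENNReal.ofReal_mul (by positivity)]
    congr 1
    field_simp
  -- measurability of the big integrand
  have hbig : Measurable fun q : (sphere (0 : EuclideanSpace ℂ (Fin n)) 1 × Ioi (0:ℝ)) × ℝ =>
      G (Complex.exp (↑q.2 * Complex.I) •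
        ((q.1.2 : ℝ) • (q.1.1 : EuclideanSpace ℂ (Fin n)))) := by
    apply hGmeas.comp
    apply Continuous.measurable
    exact (Complex.continuous_exp.comp
      ((Complex.continuous_ofReal.comp continuous_snd).mul continuous_const)).smul
      ((continuous_subtype_val.comp (continuous_snd.comp continuous_fst)).smul
        (continuous_subtype_val.comp (continuous_fst.comp continuous_fst)))
  have h2π : (0:ℝ) < 2*π := by positivity
  -- main chain
  have hmain : ENNReal.ofReal (2*π) * ((‖g p‖₊ : ℝ≥0∞)^2 * volume (ball p r))
      ≤ ENNReal.ofReal (2*π) * ∫⁻ x, G x := by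
    calc ENNReal.ofReal (2*π) * ((‖g p‖₊ : ℝ≥0∞)^2 * volume (ball p r))
        = ∫⁻ vt, (univ ×ˢ Iio (⟨r, hr⟩ : Ioi (0:ℝ))).indicator
            (fun _ => ENNReal.ofReal (2*π) * (‖g p‖₊:ℝ≥0∞)^2) vt ∂(σ.prod ρ) := by
          rw [lintegral_indicator (MeasurableSet.univ.prod measurableSet_Iio),
            setLIntegral_const, hσρ, mul_assoc]
    _ ≤ ∫⁻ vt : sphere (0 : EuclideanSpace ℂ (Fin n)) 1 × Ioi (0:ℝ),
          (∫⁻ θ in Ioc (0:ℝ) (2*π),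
            G (Complex.exp (↑θ * Complex.I) •
              ((vt.2 : ℝ) • (vt.1 : EuclideanSpace ℂ (Fin n))))) ∂(σ.prod ρ) :=
        lintegral_mono hkey
    _ = ∫⁻ θ in Ioc (0:ℝ) (2*π), (∫⁻ vt : sphere (0 : EuclideanSpace ℂ (Fin n)) 1 × Ioi (0:ℝ),
          G (Complex.exp (↑θ * Complex.I) •
            ((vt.2 : ℝ) • (vt.1 : EuclideanSpace ℂ (Fin n)))) ∂(σ.prod ρ)) :=
        lintegral_lintegral_swap hbig.aemeasurable
    _ = ∫⁻ _ in Ioc 0 (2*π), ∫⁻ x, G x := by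
        apply lintegral_congr
        intro θ
        have hrot : Measurable fun x : EuclideanSpace ℂ (Fin n) =>
            G (Complex.exp (↑θ * Complex.I) • x) :=
          hGmeas.comp (by fun_prop : Continuous fun x : EuclideanSpace ℂ (Fin n) =>
            Complex.exp (↑θ * Complex.I) • x).measurable
        rw [hpolar _ hrot, (hrotmp θ).lintegral_comp hGmeas]
    _ = ENNReal.ofReal (2*π) * ∫⁻ x, G x := by
        rw [setLIntegral_const, Real.volume_Ioc, sub_zero, mul_comm]
  have h2π0 : ENNReal.ofReal (2*π) ≠ 0 := by
    simp only [ne_eq, ENNReal.ofReal_eq_zero, not_le]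
    exact h2π
  have hfin := (ENNReal.mul_le_mul_iff_right h2π0 ENNReal.ofReal_ne_top).mp hmain
  rwa [htrans] at hfin

end AuxLemmas

open Real Set Complex in
/-- If `C_φ` is compact on `A²(Ω)` and `(h_j)` is a sequence in the closed unit ball of
`A²(Ω)` tending to `0` uniformly on compact subsets, then for any points `p_j ∈ Ω` and radii
`r_j > 0` with `closedBall p_j r_j ⊆ Ω`, we have `|h_j(φ(p_j))| · V(B(p_j,r_j))^{1/2} → 0`. -/
theorem stmt_8 {n : ℕ} (Ω : Set (EuclideanSpace ℂ (Fin n)))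
    (hopen : IsOpen Ω) (hbdd : Bornology.IsBounded Ω)
    (φ : EuclideanSpace ℂ (Fin n) → EuclideanSpace ℂ (Fin n))
    (hmaps : Set.MapsTo φ Ω Ω)
    (hφholo : DifferentiableOn ℂ φ Ω)
    (hcompact : IsCompactCompositionOperator Ω φ)
    (h : ℕ → EuclideanSpace ℂ (Fin n) → ℂ)
    (hhholo : ∀ j, DifferentiableOn ℂ (h j) Ω)
    (hhbdd : ∀ j, ∫⁻ z in Ω, (‖h j z‖₊ : ℝ≥0∞) ^ 2 ∂volume ≤ 1)
    (hhunif : ∀ K ⊆ Ω, IsCompact K → TendstoUniformlyOn h 0 atTop K)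
    (p : ℕ → EuclideanSpace ℂ (Fin n)) (r : ℕ → ℝ) (hr : ∀ j, 0 < r j)
    (hball : ∀ j, closedBall (p j) (r j) ⊆ Ω) :
    Tendsto (fun j => ‖h j (φ (p j))‖ * Real.sqrt ((volume (ball (p j) (r j))).toReal))
      atTop (nhds 0) := by
  have hΩm : MeasurableSet Ω := hopen.measurableSet
  -- pointwise convergence of h j (φ z) for z ∈ Ω
  have hpt : ∀ z ∈ Ω, Tendsto (fun j => h j (φ z)) atTop (nhds 0) := by
    intro z hz
    have hK := hhunif {φ z} (by simpa using hmaps hz) isCompact_singleton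
    have := hK.tendsto_at (Set.mem_singleton (φ z))
    simpa using this
  -- an elementary inequality in ℝ≥0∞
  have haux : ∀ u v : ℝ≥0∞, (u + v)^2 ≤ 4*u^2 + 4*v^2 := by
    intro u v
    have h1 : u + v ≤ 2 * max u v := by
      rw [two_mul]
      exact add_le_add (le_max_left u v) (le_max_right u v)
    have h2 : (max u v)^2 ≤ u^2 + v^2 := by
      rcases max_cases u v with ⟨hm, _⟩ | ⟨hm, _⟩ <;> rw [hm]
      · exact self_le_add_right _ _
      · exact self_le_add_left _ _
    calc (u + v)^2 ≤ (2 * max u v)^2 := by gcongr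
    _ = 4 * (max u v)^2 := by rw [mul_pow]; norm_num
    _ ≤ 4 * (u^2 + v^2) := by gcongr
    _ = 4*u^2 + 4*v^2 := by ring
  -- the L² norms of h j ∘ φ over Ω tend to 0
  set D : ℕ → ℝ≥0∞ := fun j => ∫⁻ z in Ω, (‖h j (φ z)‖₊ : ℝ≥0∞) ^ 2 ∂volume with hD
  have hDto : Tendsto D atTop (nhds 0) := by
    apply tendsto_of_subseq_tendsto
    intro ns hns
    obtain ⟨k, hk, hlim, hlimm, hL2⟩ :=
      hcompact (fun i => h (ns i)) (fun i => hhholo _) (fun i => hhbdd _)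
    refine ⟨k, ?_⟩
    have hmono : Tendsto (fun i => ns (k i)) atTop atTop := hns.comp hk.tendsto_atTop
    set f : ℕ → EuclideanSpace ℂ (Fin n) → ℂ := fun i z => h (ns (k i)) (φ z) with hf
    have haem : ∀ i, AEMeasurable (fun z => (‖f i z - hlim z‖₊ : ℝ≥0∞)^2)
        (volume.restrict Ω) := by
      intro i
      have hc : ContinuousOn (f i) Ω :=
        (hhholo _).continuousOn.comp hφholo.continuousOn hmaps
      exact (((hc.aemeasurable hΩm).sub hlimm.aemeasurable).nnnorm.coe_nnreal_ennreal).pow_const 2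
    have hptae : ∀ᵐ z ∂(volume.restrict Ω),
        Tendsto (fun i => (‖f i z - hlim z‖₊ : ℝ≥0∞)^2) atTop
          (nhds ((‖hlim z‖₊ : ℝ≥0∞)^2)) := by
      filter_upwards [ae_restrict_mem hΩm] with z hz
      have h1 : Tendsto (fun i => f i z) atTop (nhds 0) := (hpt z hz).comp hmono
      have h2 : Tendsto (fun i => f i z - hlim z) atTop (nhds (0 - hlim z)) := h1.sub_const _
      rw [zero_sub] at h2
      have h3 : Tendsto (fun i => (‖f i z - hlim z‖₊ : ℝ≥0∞)) atTop
          (nhds ((‖-hlim z‖₊ : ℝ≥0∞))) := ENNReal.tendsto_coe.mpr h2.nnnorm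
      rw [nnnorm_neg] at h3
      exact ((ENNReal.continuous_pow 2).tendsto _).comp h3
    -- the limit function vanishes on Ω
    have hzero : ∫⁻ z in Ω, (‖hlim z‖₊ : ℝ≥0∞)^2 ∂volume = 0 := by
      have hfatou := lintegral_liminf_le' (u := atTop) haem
      have hcong : ∫⁻ z in Ω, (‖hlim z‖₊ : ℝ≥0∞)^2 ∂volume
          = ∫⁻ z in Ω, liminf (fun i => (‖f i z - hlim z‖₊ : ℝ≥0∞)^2) atTop ∂volume := by
        apply lintegral_congr_ae
        filter_upwards [hptae] with z hz
        exact hz.liminf_eq.symm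
      rw [hcong]
      refine le_antisymm (le_trans hfatou ?_) zero_le
      rw [hL2.liminf_eq]
    -- bound D along the subsequence
    have hbound : ∀ i, D (ns (k i))
        ≤ 4 * ∫⁻ z in Ω, (‖f i z - hlim z‖₊ : ℝ≥0∞)^2 ∂volume := by
      intro i
      have hptw : ∀ z, (‖f i z‖₊ : ℝ≥0∞)^2
          ≤ 4 * (‖f i z - hlim z‖₊ : ℝ≥0∞)^2 + 4 * (‖hlim z‖₊ : ℝ≥0∞)^2 := by
        intro z
        have h1 : (‖f i z‖₊ : ℝ≥0∞) ≤ (‖f i z - hlim z‖₊ : ℝ≥0∞) + (‖hlim z‖₊ : ℝ≥0∞) := by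
          rw [← ENNReal.coe_add, ENNReal.coe_le_coe]
          calc ‖f i z‖₊ = ‖f i z - hlim z + hlim z‖₊ := by rw [sub_add_cancel]
          _ ≤ ‖f i z - hlim z‖₊ + ‖hlim z‖₊ := nnnorm_add_le _ _
        calc (‖f i z‖₊ : ℝ≥0∞)^2
            ≤ ((‖f i z - hlim z‖₊ : ℝ≥0∞) + (‖hlim z‖₊ : ℝ≥0∞))^2 := by gcongr
        _ ≤ 4 * (‖f i z - hlim z‖₊ : ℝ≥0∞)^2 + 4 * (‖hlim z‖₊ : ℝ≥0∞)^2 := haux _ _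
      calc D (ns (k i)) ≤ ∫⁻ z in Ω, (4 * (‖f i z - hlim z‖₊ : ℝ≥0∞)^2
            + 4 * (‖hlim z‖₊ : ℝ≥0∞)^2) ∂volume := lintegral_mono fun z => hptw z
      _ = (∫⁻ z in Ω, 4 * (‖f i z - hlim z‖₊ : ℝ≥0∞)^2 ∂volume)
            + ∫⁻ z in Ω, 4 * (‖hlim z‖₊ : ℝ≥0∞)^2 ∂volume :=
          lintegral_add_left' ((haem i).const_mul 4) _
      _ = 4 * (∫⁻ z in Ω, (‖f i z - hlim z‖₊ : ℝ≥0∞)^2 ∂volume)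
            + 4 * ∫⁻ z in Ω, (‖hlim z‖₊ : ℝ≥0∞)^2 ∂volume := by
          rw [lintegral_const_mul' _ _ (by norm_num), lintegral_const_mul' _ _ (by norm_num)]
      _ = 4 * ∫⁻ z in Ω, (‖f i z - hlim z‖₊ : ℝ≥0∞)^2 ∂volume := by
          rw [hzero, mul_zero, add_zero]
    have h4 : Tendsto (fun i => 4 * ∫⁻ z in Ω, (‖f i z - hlim z‖₊ : ℝ≥0∞)^2 ∂volume)
        atTop (nhds 0) := by
      have := ENNReal.Tendsto.const_mul hL2 (Or.inr (by norm_num : (4:ℝ≥0∞) ≠ ⊤))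
      simpa using this
    exact tendsto_of_tendsto_of_tendsto_of_le_of_le tendsto_const_nhds h4
      (fun i => zero_le) hbound
  -- pointwise sub-mean-value bound
  set X : ℕ → ℝ≥0∞ :=
    fun j => (‖h j (φ (p j))‖₊ : ℝ≥0∞)^2 * volume (ball (p j) (r j)) with hX
  have hXle : ∀ j, X j ≤ D j := by
    intro j
    have hcomp : DifferentiableOn ℂ (fun z => h j (φ z)) Ω := (hhholo j).comp hφholo hmaps
    refine le_trans (submean hopen hcomp (hr j) (hball j)) ?_
    exact lintegral_mono_set ((ball_subset_closedBall).trans (hball j))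
  have hXto : Tendsto X atTop (nhds 0) :=
    tendsto_of_tendsto_of_tendsto_of_le_of_le tendsto_const_nhds hDto
      (fun j => zero_le) hXle
  have htoreal : Tendsto (fun j => (X j).toReal) atTop (nhds 0) := by
    have := (ENNReal.tendsto_toReal (by simp : (0:ℝ≥0∞) ≠ ⊤)).comp hXto
    simpa [Function.comp_def] using this
  have hsqrt : Tendsto (fun j => Real.sqrt (X j).toReal) atTop (nhds 0) := by
    have := (Real.continuous_sqrt.tendsto 0).comp htoreal
    simpa [Function.comp_def] using this
  have heq : (fun j => ‖h j (φ (p j))‖ * Real.sqrt ((volume (ball (p j) (r j))).toReal))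
      = fun j => Real.sqrt (X j).toReal := by
    funext j
    rw [hX, ENNReal.toReal_mul, Real.sqrt_mul (by positivity)]
    congr 1
    rw [ENNReal.toReal_pow, ENNReal.coe_toReal, coe_nnnorm]
    exact (Real.sqrt_sq (norm_nonneg _)).symm
  rw [heq]
  exact hsqrt
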